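/- Let G be a K₆-free graph on n vertices, and let S be a set of vertices of G such that the subgraph of G induced by S is K₅-free. If |S| ≥ 49n/50, then τ_B(G) ≤ 3n²/20. -/

import Mathlib

set_option linter.unusedSectionVars false
set_option maxHeartbeats 1000000



open SimpleGraph Finset

variable {V : Type*} [Fintype V] [DecidableEq V]

/-- `A` is a triangle-independent edge set of `G`: a set of edges of `G`
containing at most one edge from each triangle of `G`. -/
def IsTriangleIndep (G : SimpleGraph V) (A : Finset (Sym2 V)) : Prop :=
  (A : Set (Sym2 V)) ⊆ G.edgeSet ∧
    ∀ a b c : V, G.Adj a b → G.Adj b c → G.Adj a c →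
      ({s(a, b), s(b, c), s(a, c)} ∩ A).card ≤ 1

/-- `α₁(G)`: the maximum size of a triangle-independent set in `G`. -/
noncomputable def alphaOne (G : SimpleGraph V) : ℕ :=
  sSup {k | ∃ A : Finset (Sym2 V), IsTriangleIndep G A ∧ A.card = k}

/-- `τ_B(G)`: the minimum size of an edge set of `G` whose deletion makes `G` bipartite. -/
noncomputable def tauB (G : SimpleGraph V) : ℕ :=
  sInf {k | ∃ D : Finset (Sym2 V), (D : Set (Sym2 V)) ⊆ G.edgeSet ∧
    (G.deleteEdges (D : Set (Sym2 V))).Colorable 2 ∧ D.card = k}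

/-- `b(G)`: the maximum size of a vertex set inducing a bipartite subgraph of `G`. -/
noncomputable def bipNum (G : SimpleGraph V) : ℕ :=
  sSup {k | ∃ B : Finset V, (G.induce (B : Set V)).Colorable 2 ∧ B.card = k}

namespace TBaux
variable {V : Type*} [Fintype V] [DecidableEq V] (G : SimpleGraph V) [DecidableRel G.Adj]

variable {V : Type*} [Fintype V] [DecidableEq V] (G : SimpleGraph V) [DecidableRel G.Adj]

def ew (p q : V) : ℕ := if G.Adj p q then 1 else 0

/-- complement indicator -/
def ewc (p q : V) : ℕ := if G.Adj p q then 0 else 1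
def eo (X : Finset V) : ℕ := ∑ p ∈ X, ∑ q ∈ X, ew G p q
def cr (X Y : Finset V) : ℕ := ∑ p ∈ X, ∑ q ∈ Y, ew G p q
def ro (X : Finset V) (v : V) : ℕ := ∑ q ∈ X, ew G v q
def mo (X : Finset V) (f : V → Fin 4) : ℕ :=
  ∑ p ∈ X, ∑ q ∈ X, ew G p q * (if f p = f q then 1 else 0)

variable {G}

lemma ew_symm (p q : V) : ew G p q = ew G q p := by simp [ew, SimpleGraph.adj_comm]
lemma ew_self (p : V) : ew G p p = 0 := by simp [ew]
lemma ew_le_one (p q : V) : ew G p q ≤ 1 := by unfold ew; split <;> omega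
lemma ew_eq_zero_of_not_adj {p q : V} (h : ¬ G.Adj p q) : ew G p q = 0 := by simp [ew, h]
lemma ew_eq_one_of_adj {p q : V} (h : G.Adj p q) : ew G p q = 1 := by simp [ew, h]

lemma cr_symm (X Y : Finset V) : cr G X Y = cr G Y X := by
  rw [cr, Finset.sum_comm, cr]
  exact Finset.sum_congr rfl fun p _ => Finset.sum_congr rfl fun q _ => ew_symm q p

lemma eo_union {X Y : Finset V} (h : Disjoint X Y) :
    eo G (X ∪ Y) = eo G X + eo G Y + (cr G X Y + cr G Y X) := by
  unfold eo cr
  rw [Finset.sum_union h]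
  have h1 : ∀ p, ∑ q ∈ X ∪ Y, ew G p q = ∑ q ∈ X, ew G p q + ∑ q ∈ Y, ew G p q :=
    fun p => Finset.sum_union h
  simp_rw [h1, Finset.sum_add_distrib]
  ring

lemma mo_union {X Y : Finset V} (h : Disjoint X Y) (f : V → Fin 4)
    (hval : ∀ p ∈ X, ∀ q ∈ Y, f p ≠ f q) :
    mo G (X ∪ Y) f = mo G X f + mo G Y f := by
  unfold mo
  rw [Finset.sum_union h]
  have h1 : ∀ p, ∑ q ∈ X ∪ Y, ew G p q * (if f p = f q then 1 else 0)
      = ∑ q ∈ X, ew G p q * (if f p = f q then 1 else 0)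
        + ∑ q ∈ Y, ew G p q * (if f p = f q then 1 else 0) :=
    fun p => Finset.sum_union h
  simp_rw [h1, Finset.sum_add_distrib]
  have hXY : ∀ p ∈ X, ∑ q ∈ Y, ew G p q * (if f p = f q then 1 else 0) = 0 := by
    intro p hp
    refine Finset.sum_eq_zero fun q hq => ?_
    simp [hval p hp q hq]
  have hYX : ∀ p ∈ Y, ∑ q ∈ X, ew G p q * (if f p = f q then 1 else 0) = 0 := by
    intro p hp
    refine Finset.sum_eq_zero fun q hq => ?_
    have hne : f p ≠ f q := Ne.symm (hval q hq p hp)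
    simp [hne]
  rw [Finset.sum_congr rfl hXY, Finset.sum_congr rfl hYX]
  simp [Finset.sum_add_distrib]

lemma mo_le_eo (X : Finset V) (f : V → Fin 4) : mo G X f ≤ eo G X := by
  refine Finset.sum_le_sum fun p _ => Finset.sum_le_sum fun q _ => ?_
  rcases eq_or_ne (f p) (f q) with h | h <;> simp [h]

lemma mo_congr {X : Finset V} {f g : V → Fin 4} (h : ∀ v ∈ X, f v = g v) :
    mo G X f = mo G X g := by
  unfold mo
  refine Finset.sum_congr rfl fun p hp => Finset.sum_congr rfl fun q hq => ?_
  rw [h p hp, h q hq]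

lemma eo_eq_zero_of_indep {X : Finset V} (h : ∀ p ∈ X, ∀ q ∈ X, ¬ G.Adj p q) :
    eo G X = 0 :=
  Finset.sum_eq_zero fun p hp => Finset.sum_eq_zero fun q hq =>
    ew_eq_zero_of_not_adj (h p hp q hq)

lemma ro_le_card (X : Finset V) (v : V) : ro G X v ≤ X.card := by
  calc ro G X v ≤ ∑ _q ∈ X, 1 := Finset.sum_le_sum fun q _ => ew_le_one v q
  _ = X.card := by simp

lemma ro_union {X Y : Finset V} (h : Disjoint X Y) (v : V) :
    ro G (X ∪ Y) v = ro G X v + ro G Y v := Finset.sum_union h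

lemma ro_univ_le (v : V) : ro G Finset.univ v ≤ Fintype.card V - 1 := by
  have h0 : ro G Finset.univ v = ∑ q ∈ Finset.univ.erase v, ew G v q := by
    rw [ro, ← Finset.sum_erase_add _ _ (Finset.mem_univ v), ew_self, add_zero]
  rw [h0]
  calc ∑ q ∈ Finset.univ.erase v, ew G v q ≤ ∑ _q ∈ Finset.univ.erase v, 1 :=
        Finset.sum_le_sum fun q _ => ew_le_one v q
  _ = (Finset.univ.erase v).card := by simp
  _ = Fintype.card V - 1 := by rw [Finset.card_erase_of_mem (Finset.mem_univ v)]; simp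

lemma card_filter_adj (X : Finset V) (v : V) :
    (X.filter (fun q => G.Adj v q)).card = ro G X v := by
  rw [Finset.card_filter]; rfl

/-- eo over union bound used in L1/L2: sum of full row degrees over the second part. -/
lemma eo_add_cr (X Y : Finset V) :
    eo G Y + cr G Y X = ∑ q ∈ Y, (ro G Y q + ro G X q) := by
  unfold eo cr ro
  rw [← Finset.sum_add_distrib]

/-- **L1**: triangle-free 2-partition bound. -/
lemma L1 (C : Finset V)
    (hC : ∀ p ∈ C, ∀ q ∈ C, ∀ r ∈ C, G.Adj p q → G.Adj p r → G.Adj q r → False) :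
    ∃ f : V → Fin 4, (∀ v, f v = 0 ∨ f v = 1) ∧
      2 * (mo G C f + eo G C) ≤ C.card ^ 2 := by
  rcases C.eq_empty_or_nonempty with rfl | hne
  · exact ⟨fun _ => 0, fun v => Or.inl rfl, by simp [mo, eo]⟩
  obtain ⟨z, hzC, hzmax⟩ := C.exists_max_image (fun v => ro G C v) hne
  set C1 := C.filter (fun v => G.Adj z v) with hC1
  set C2 := C.filter (fun v => ¬ G.Adj z v) with hC2
  have hdisj : Disjoint C1 C2 := Finset.disjoint_filter_filter_not C C _
  have hunion : C1 ∪ C2 = C := Finset.filter_union_filter_not_eq _ C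
  set f : V → Fin 4 := fun v => if G.Adj z v then 0 else 1 with hf
  refine ⟨f, fun v => by by_cases h : G.Adj z v <;> simp [hf, h], ?_⟩
  -- C1 is independent
  have hindep : ∀ p ∈ C1, ∀ q ∈ C1, ¬ G.Adj p q := by
    intro p hp q hq hpq
    rw [hC1, Finset.mem_filter] at hp hq
    exact hC p hp.1 q hq.1 z hzC hpq hp.2.symm hq.2.symm
  have heoC1 : eo G C1 = 0 := eo_eq_zero_of_indep hindep
  -- mo over C splits
  have hval : ∀ p ∈ C1, ∀ q ∈ C2, f p ≠ f q := by
    intro p hp q hq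
    rw [hC1, Finset.mem_filter] at hp
    rw [hC2, Finset.mem_filter] at hq
    simp [hf, hp.2, hq.2]
  have hmo : mo G C f = mo G C1 f + mo G C2 f := by
    rw [← hunion]; exact mo_union hdisj f hval
  have heo : eo G C = eo G C1 + eo G C2 + (cr G C1 C2 + cr G C2 C1) := by
    rw [← hunion]; exact eo_union hdisj
  have hmo1 : mo G C1 f ≤ eo G C1 := mo_le_eo C1 f
  have hmo2 : mo G C2 f ≤ eo G C2 := mo_le_eo C2 f
  have hcr : cr G C1 C2 = cr G C2 C1 := cr_symm _ _
  -- degree bound: eo C2 + cr C2 C1 = Σ_{q∈C2} ro C q ≤ |C2| * ro C z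
  have hrow : eo G C2 + cr G C2 C1 = ∑ q ∈ C2, ro G C q := by
    rw [eo_add_cr]
    refine Finset.sum_congr rfl fun q _ => ?_
    rw [← hunion, ro_union hdisj]
    exact Nat.add_comm _ _
  have hdeg : ∀ q ∈ C2, ro G C q ≤ ro G C z := by
    intro q hq
    rw [hC2, Finset.mem_filter] at hq
    exact hzmax q hq.1
  have hsum : ∑ q ∈ C2, ro G C q ≤ C2.card * ro G C z := by
    calc ∑ q ∈ C2, ro G C q ≤ ∑ _q ∈ C2, ro G C z := Finset.sum_le_sum hdeg
    _ = C2.card * ro G C z := by rw [Finset.sum_const, smul_eq_mul]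
  -- |C1| = ro C z  (note: z's neighbors in C)
  have hcard1 : C1.card = ro G C z := card_filter_adj C z
  have hcards : C1.card + C2.card = C.card := by
    rw [← Finset.card_union_of_disjoint hdisj, hunion]
  -- put it together
  have key : 2 * (mo G C f + eo G C) ≤ 4 * (C2.card * ro G C z) := by
    have e1 : mo G C f + eo G C ≤ 2 * (eo G C2 + cr G C2 C1) := by
      rw [hmo, heo, heoC1, hcr]; omega
    have e2 : eo G C2 + cr G C2 C1 ≤ C2.card * ro G C z := by
      rw [hrow]; exact hsum
    omega
  have h4 : 4 * (C2.card * ro G C z) ≤ C.card ^ 2 := by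
    have h1' : (C1.card : ℤ) = ro G C z := by exact_mod_cast hcard1
    have h2' : (C1.card : ℤ) + C2.card = C.card := by exact_mod_cast hcards
    zify
    nlinarith [sq_nonneg ((C1.card : ℤ) - C2.card)]
  omega


/-- **L2**: K4-free 3-partition bound. -/
lemma L2 (A : Finset V)
    (hA : ∀ p ∈ A, ∀ q ∈ A, ∀ r ∈ A, ∀ t ∈ A, G.Adj p q → G.Adj p r → G.Adj p t →
      G.Adj q r → G.Adj q t → G.Adj r t → False) :
    ∃ g : V → Fin 4, (∀ v, g v = 0 ∨ g v = 1 ∨ g v = 2) ∧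
      6 * (mo G A g + eo G A) ≤ 4 * A.card ^ 2 := by
  rcases A.eq_empty_or_nonempty with rfl | hne
  · exact ⟨fun _ => 0, fun v => Or.inl rfl, by simp [mo, eo]⟩
  obtain ⟨w, hwA, hwmax⟩ := A.exists_max_image (fun v => ro G A v) hne
  set C := A.filter (fun v => G.Adj w v) with hCdef
  set D := A.filter (fun v => ¬ G.Adj w v) with hDdef
  have hdisj : Disjoint C D := Finset.disjoint_filter_filter_not A A _
  have hunion : C ∪ D = A := Finset.filter_union_filter_not_eq _ A
  -- C is triangle-free
  have hC3 : ∀ p ∈ C, ∀ q ∈ C, ∀ r ∈ C, G.Adj p q → G.Adj p r → G.Adj q r → False := by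
    intro p hp q hq r hr hpq hpr hqr
    rw [hCdef, Finset.mem_filter] at hp hq hr
    exact hA p hp.1 q hq.1 r hr.1 w hwA hpq hpr hp.2.symm hqr hq.2.symm hr.2.symm
  obtain ⟨f, hfval, hfbd⟩ := L1 C hC3
  set g : V → Fin 4 := fun v => if G.Adj w v then f v else 2 with hg
  have hgval : ∀ v, g v = 0 ∨ g v = 1 ∨ g v = 2 := by
    intro v
    by_cases h : G.Adj w v
    · rcases hfval v with h0 | h0 <;> simp [hg, h, h0]
    · simp [hg, h]
  refine ⟨g, hgval, ?_⟩
  have hgC : ∀ v ∈ C, g v = f v := by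
    intro v hv; rw [hCdef, Finset.mem_filter] at hv; simp [hg, hv.2]
  have hgD : ∀ v ∈ D, g v = 2 := by
    intro v hv; rw [hDdef, Finset.mem_filter] at hv; simp [hg, hv.2]
  have hval : ∀ p ∈ C, ∀ q ∈ D, g p ≠ g q := by
    intro p hp q hq
    rw [hgC p hp, hgD q hq]
    rcases hfval p with h0 | h0 <;> rw [h0] <;> decide
  have hmo : mo G A g = mo G C g + mo G D g := by
    rw [← hunion]; exact mo_union hdisj g hval
  have hmoC : mo G C g = mo G C f := mo_congr hgC
  have hmoD : mo G D g ≤ eo G D := mo_le_eo D g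
  have heo : eo G A = eo G C + eo G D + (cr G C D + cr G D C) := by
    rw [← hunion]; exact eo_union hdisj
  have hcr : cr G C D = cr G D C := cr_symm _ _
  have hrow : eo G D + cr G D C = ∑ q ∈ D, ro G A q := by
    rw [eo_add_cr]
    refine Finset.sum_congr rfl fun q _ => ?_
    rw [← hunion, ro_union hdisj]
    exact Nat.add_comm _ _
  have hdeg : ∀ q ∈ D, ro G A q ≤ ro G A w := by
    intro q hq
    rw [hDdef, Finset.mem_filter] at hq
    exact hwmax q hq.1
  have hsum : ∑ q ∈ D, ro G A q ≤ D.card * ro G A w := by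
    calc ∑ q ∈ D, ro G A q ≤ ∑ _q ∈ D, ro G A w := Finset.sum_le_sum hdeg
    _ = D.card * ro G A w := by rw [Finset.sum_const, smul_eq_mul]
  have hcard1 : C.card = ro G A w := card_filter_adj A w
  have hcards : C.card + D.card = A.card := by
    rw [← Finset.card_union_of_disjoint hdisj, hunion]
  -- 6(mo A g + eo A) = 6(mo C f) + 6 eo C + 6 mo D g + 6 eo D + 12 cr D C
  --                  ≤ 3 C.card² + 12 (eo D + cr D C) ≤ 3 c² + 12 (A.card - c) c ≤ 4 A.card²
  have key : 6 * (mo G A g + eo G A) ≤ 3 * C.card ^ 2 + 12 * (D.card * ro G A w) := by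
    have e1 : mo G A g + eo G A ≤ (mo G C f + eo G C) + 2 * (eo G D + cr G D C) := by
      rw [hmo, hmoC, heo, hcr]; omega
    have e2 : eo G D + cr G D C ≤ D.card * ro G A w := by rw [hrow]; exact hsum
    have e3 : 2 * (mo G C f + eo G C) ≤ C.card ^ 2 := hfbd
    omega
  have h4 : 3 * C.card ^ 2 + 12 * (D.card * ro G A w) ≤ 4 * A.card ^ 2 := by
    have h1' : (C.card : ℤ) = ro G A w := by exact_mod_cast hcard1
    have h2' : (C.card : ℤ) + D.card = A.card := by exact_mod_cast hcards
    zify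
    nlinarith [sq_nonneg (2 * (A.card : ℤ) - 3 * C.card)]
  omega

lemma ite_eq_ew_mul (u p : V) (X : ℕ) :
    (if G.Adj u p then X else 0) = ew G u p * X := by
  by_cases h : G.Adj u p <;> simp [ew, h]

lemma ite_eq_ewc_mul (u p : V) (X : ℕ) :
    (if ¬ G.Adj u p then X else 0) = ewc G u p * X := by
  by_cases h : G.Adj u p <;> simp [ewc, h]

lemma eo_filter_adj (S : Finset V) (u : V) :
    eo G (S.filter (fun v => G.Adj u v)) =
      ∑ p ∈ S, ∑ q ∈ S, ew G u p * (ew G u q * ew G p q) := by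
  unfold eo
  rw [Finset.sum_filter]
  refine Finset.sum_congr rfl fun p _ => ?_
  by_cases h : G.Adj u p
  · rw [if_pos h, Finset.sum_filter]
    refine Finset.sum_congr rfl fun q _ => ?_
    by_cases h2 : G.Adj u q <;> simp [ew, h, h2]
  · simp [ew, h]

lemma eo_filter_nadj (S : Finset V) (u : V) :
    eo G (S.filter (fun v => ¬ G.Adj u v)) =
      ∑ p ∈ S, ∑ q ∈ S, ewc G u p * (ewc G u q * ew G p q) := by
  unfold eo
  rw [Finset.sum_filter]
  refine Finset.sum_congr rfl fun p _ => ?_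
  by_cases h : G.Adj u p
  · simp [ewc, ew, h]
  · rw [if_pos h, Finset.sum_filter]
    refine Finset.sum_congr rfl fun q _ => ?_
    by_cases h2 : G.Adj u q <;> simp [ewc, ew, h, h2]

lemma ro_sum_left (S : Finset V) (p : V) : ∑ u ∈ S, ew G u p = ro G S p := by
  unfold ro
  exact Finset.sum_congr rfl fun u _ => ew_symm u p

/-- T1 -/
lemma triple1 (S : Finset V) :
    ∑ u ∈ S, ∑ p ∈ S, ∑ q ∈ S, ew G u p * ew G p q = ∑ p ∈ S, (ro G S p) ^ 2 := by
  have h1 : ∀ u, ∀ p, ∑ q ∈ S, ew G u p * ew G p q = ew G u p * ro G S p := by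
    intro u p; rw [← Finset.mul_sum]; rfl
  simp_rw [h1]
  rw [Finset.sum_comm]
  refine Finset.sum_congr rfl fun p _ => ?_
  rw [← Finset.sum_mul, ro_sum_left, sq]

/-- T2 -/
lemma triple2 (S : Finset V) :
    ∑ u ∈ S, ∑ p ∈ S, ∑ q ∈ S, ew G u q * ew G p q = ∑ p ∈ S, (ro G S p) ^ 2 := by
  have h0 : ∀ u, ∑ p ∈ S, ∑ q ∈ S, ew G u q * ew G p q
      = ∑ q ∈ S, ew G u q * ro G S q := by
    intro u
    rw [Finset.sum_comm]
    refine Finset.sum_congr rfl fun q _ => ?_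
    rw [← Finset.mul_sum, ro_sum_left]
  simp_rw [h0]
  rw [Finset.sum_comm]
  refine Finset.sum_congr rfl fun q _ => ?_
  rw [← Finset.sum_mul, ro_sum_left, sq]

/-- pointwise identity -/
lemma pointwise_id (u p q : V) :
    ewc G u p * (ewc G u q * ew G p q) + ew G u p * ew G p q + ew G u q * ew G p q
    = ew G p q + ew G u p * (ew G u q * ew G p q) := by
  by_cases h1 : G.Adj u p <;> by_cases h2 : G.Adj u q <;> simp [ew, ewc, h1, h2]

lemma sum3_add {α : Type*} (S : Finset α) (f g : α → α → α → ℕ) :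
    ∑ u ∈ S, ∑ p ∈ S, ∑ q ∈ S, (f u p q + g u p q)
    = (∑ u ∈ S, ∑ p ∈ S, ∑ q ∈ S, f u p q) + ∑ u ∈ S, ∑ p ∈ S, ∑ q ∈ S, g u p q := by
  simp [Finset.sum_add_distrib]

/-- **Key averaging identity.** -/
lemma key_avg (S : Finset V) :
    (∑ u ∈ S, eo G (S.filter (fun v => ¬ G.Adj u v))) + 2 * ∑ p ∈ S, (ro G S p) ^ 2
    = S.card * eo G S + ∑ u ∈ S, eo G (S.filter (fun v => G.Adj u v)) := by
  have lhs1 : (∑ u ∈ S, eo G (S.filter (fun v => ¬ G.Adj u v)))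
      = ∑ u ∈ S, ∑ p ∈ S, ∑ q ∈ S, ewc G u p * (ewc G u q * ew G p q) :=
    Finset.sum_congr rfl fun u _ => eo_filter_nadj S u
  have rhs1 : (∑ u ∈ S, eo G (S.filter (fun v => G.Adj u v)))
      = ∑ u ∈ S, ∑ p ∈ S, ∑ q ∈ S, ew G u p * (ew G u q * ew G p q) :=
    Finset.sum_congr rfl fun u _ => eo_filter_adj S u
  have hcardE : S.card * eo G S = ∑ u ∈ S, ∑ p ∈ S, ∑ q ∈ S, ew G p q := by
    rw [Finset.sum_const, smul_eq_mul]
    rfl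
  rw [lhs1, rhs1]
  have two_mul_Q : 2 * ∑ p ∈ S, (ro G S p) ^ 2
      = (∑ u ∈ S, ∑ p ∈ S, ∑ q ∈ S, ew G u p * ew G p q)
        + ∑ u ∈ S, ∑ p ∈ S, ∑ q ∈ S, ew G u q * ew G p q := by
    rw [triple1, triple2]; ring
  rw [two_mul_Q, hcardE]
  have main : ∑ u ∈ S, ∑ p ∈ S, ∑ q ∈ S,
        (ewc G u p * (ewc G u q * ew G p q) + (ew G u p * ew G p q + ew G u q * ew G p q))
      = ∑ u ∈ S, ∑ p ∈ S, ∑ q ∈ S, (ew G p q + ew G u p * (ew G u q * ew G p q)) := by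
    refine Finset.sum_congr rfl fun u _ => Finset.sum_congr rfl fun p _ =>
      Finset.sum_congr rfl fun q _ => ?_
    have := pointwise_id (G := G) u p q
    omega
  have s1 := sum3_add S (fun u p q => ewc G u p * (ewc G u q * ew G p q))
      (fun u p q => ew G u p * ew G p q + ew G u q * ew G p q)
  have s2 := sum3_add S (fun u p q => ew G u p * ew G p q)
      (fun u p q => ew G u q * ew G p q)
  have s3 := sum3_add S (fun u p q => ew G p q)
      (fun u p q => ew G u p * (ew G u q * ew G p q))
  simp only [s1, s2, s3] at main
  omega

/-- From `CliqueFree 5` of the induced graph, extract explicit 5-vertex statement. -/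
lemma no5 {S : Finset V} (hS : (G.induce (S : Set V)).CliqueFree 5) :
    ∀ a ∈ S, ∀ b ∈ S, ∀ c ∈ S, ∀ d ∈ S, ∀ e ∈ S,
      G.Adj a b → G.Adj a c → G.Adj a d → G.Adj a e → G.Adj b c → G.Adj b d →
      G.Adj b e → G.Adj c d → G.Adj c e → G.Adj d e → False := by
  intro a ha b hb c hc d hd e he hab hac had hae hbc hbd hbe hcd hce hde
  set A : Type _ := ↥(S : Set V)
  have ha' : a ∈ (S : Set V) := ha
  have hb' : b ∈ (S : Set V) := hb
  have hc' : c ∈ (S : Set V) := hc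
  have hd' : d ∈ (S : Set V) := hd
  have he' : e ∈ (S : Set V) := he
  set t : Finset A := {⟨a, ha'⟩, ⟨b, hb'⟩, ⟨c, hc'⟩, ⟨d, hd'⟩, ⟨e, he'⟩} with ht
  refine hS t ⟨?_, ?_⟩
  · -- IsClique
    intro x hx y hy hxy
    simp only [ht, Finset.coe_insert, Set.mem_insert_iff, Finset.coe_singleton,
      Set.mem_singleton_iff] at hx hy
    have : G.Adj (x : V) (y : V) := by
      rcases hx with rfl | rfl | rfl | rfl | rfl <;>
        rcases hy with rfl | rfl | rfl | rfl | rfl <;>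
        first
          | exact absurd rfl hxy
          | assumption
          | (apply SimpleGraph.Adj.symm; assumption)
    exact this
  · -- card = 5
    have h1 : (⟨a, ha'⟩ : A) ≠ ⟨b, hb'⟩ := by simp [Subtype.ext_iff, hab.ne]
    have h2 : (⟨a, ha'⟩ : A) ≠ ⟨c, hc'⟩ := by simp [Subtype.ext_iff, hac.ne]
    have h3 : (⟨a, ha'⟩ : A) ≠ ⟨d, hd'⟩ := by simp [Subtype.ext_iff, had.ne]
    have h4 : (⟨a, ha'⟩ : A) ≠ ⟨e, he'⟩ := by simp [Subtype.ext_iff, hae.ne]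
    have h5 : (⟨b, hb'⟩ : A) ≠ ⟨c, hc'⟩ := by simp [Subtype.ext_iff, hbc.ne]
    have h6 : (⟨b, hb'⟩ : A) ≠ ⟨d, hd'⟩ := by simp [Subtype.ext_iff, hbd.ne]
    have h7 : (⟨b, hb'⟩ : A) ≠ ⟨e, he'⟩ := by simp [Subtype.ext_iff, hbe.ne]
    have h8 : (⟨c, hc'⟩ : A) ≠ ⟨d, hd'⟩ := by simp [Subtype.ext_iff, hcd.ne]
    have h9 : (⟨c, hc'⟩ : A) ≠ ⟨e, he'⟩ := by simp [Subtype.ext_iff, hce.ne]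
    have h10 : (⟨d, hd'⟩ : A) ≠ ⟨e, he'⟩ := by simp [Subtype.ext_iff, hde.ne]
    rw [ht]
    rw [Finset.card_insert_of_notMem (by simp [h1, h2, h3, h4]),
        Finset.card_insert_of_notMem (by simp [h5, h6, h7]),
        Finset.card_insert_of_notMem (by simp [h8, h9]),
        Finset.card_insert_of_notMem (by simp [h10]),
        Finset.card_singleton]


/-- **L3 + averaging + Cauchy-Schwarz**: the key bound for the K5-free part. -/
lemma KEY_S {S : Finset V} (hne : S.Nonempty)
    (hS5 : ∀ a ∈ S, ∀ b ∈ S, ∀ c ∈ S, ∀ d ∈ S, ∀ e ∈ S,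
      G.Adj a b → G.Adj a c → G.Adj a d → G.Adj a e → G.Adj b c → G.Adj b d →
      G.Adj b e → G.Adj c d → G.Adj c e → G.Adj d e → False) :
    ∃ h : V → Fin 4, 6 * (S.card : ℤ) ^ 2 * (mo G S h : ℤ) ≤
      6 * (eo G S : ℤ) * (S.card : ℤ) ^ 2 - 8 * (eo G S : ℤ) ^ 2 := by
  -- per-u colorings
  have per_u : ∀ u ∈ S, ∃ h : V → Fin 4,
      6 * mo G S h + 6 * eo G (S.filter (fun v => G.Adj u v)) ≤
        4 * (ro G S u) ^ 2 + 6 * eo G (S.filter (fun v => ¬ G.Adj u v)) := by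
    intro u hu
    set A := S.filter (fun v => G.Adj u v) with hAdef
    set B := S.filter (fun v => ¬ G.Adj u v) with hBdef
    have hA4 : ∀ p ∈ A, ∀ q ∈ A, ∀ r ∈ A, ∀ t ∈ A, G.Adj p q → G.Adj p r → G.Adj p t →
        G.Adj q r → G.Adj q t → G.Adj r t → False := by
      intro p hp q hq r hr t ht hpq hpr hpt hqr hqt hrt
      rw [hAdef, Finset.mem_filter] at hp hq hr ht
      exact hS5 u hu p hp.1 q hq.1 r hr.1 t ht.1 hp.2 hq.2 hr.2 ht.2
        hpq hpr hpt hqr hqt hrt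
    obtain ⟨g, hgval, hgbd⟩ := L2 A hA4
    set h : V → Fin 4 := fun v => if G.Adj u v then g v else 3 with hh
    have hdisj : Disjoint A B := Finset.disjoint_filter_filter_not S S _
    have hunion : A ∪ B = S := Finset.filter_union_filter_not_eq _ S
    have hgA : ∀ v ∈ A, h v = g v := by
      intro v hv; rw [hAdef, Finset.mem_filter] at hv; simp [hh, hv.2]
    have hgB : ∀ v ∈ B, h v = 3 := by
      intro v hv; rw [hBdef, Finset.mem_filter] at hv; simp [hh, hv.2]
    have hval : ∀ p ∈ A, ∀ q ∈ B, h p ≠ h q := by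
      intro p hp q hq
      rw [hgA p hp, hgB q hq]
      rcases hgval p with h0 | h0 | h0 <;> rw [h0] <;> decide
    have hmo : mo G S h = mo G A h + mo G B h := by
      rw [← hunion]; exact mo_union hdisj h hval
    have hmoA : mo G A h = mo G A g := mo_congr hgA
    have hmoB : mo G B h ≤ eo G B := mo_le_eo B h
    have hcard : A.card = ro G S u := card_filter_adj S u
    refine ⟨h, ?_⟩
    have h6 : 6 * (mo G A g + eo G A) ≤ 4 * A.card ^ 2 := hgbd
    rw [hcard] at h6
    omega
  -- choose the coloring for each u
  choose hcol hcolbd using per_u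
  -- objective
  set F : V → ℤ := fun u => 4 * (ro G S u : ℤ) ^ 2 +
    6 * (eo G (S.filter (fun v => ¬ G.Adj u v)) : ℤ) -
    6 * (eo G (S.filter (fun v => G.Adj u v)) : ℤ) with hF
  obtain ⟨u₀, hu₀, hmin⟩ := S.exists_min_image F hne
  have havg : (S.card : ℤ) • F u₀ ≤ ∑ u ∈ S, F u :=
    Finset.card_nsmul_le_sum S F (F u₀) (fun x hx => hmin x hx)
  -- evaluate the sum using key_avg
  have hKA := key_avg (G := G) S
  have hsum : ∑ u ∈ S, F u =
      6 * (S.card : ℤ) * (eo G S : ℤ) - 8 * ∑ p ∈ S, (ro G S p : ℤ) ^ 2 := by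
    have e1 : ∑ u ∈ S, F u =
        4 * (∑ p ∈ S, ((ro G S p : ℤ)) ^ 2) +
        6 * ((∑ u ∈ S, (eo G (S.filter (fun v => ¬ G.Adj u v)) : ℤ))) -
        6 * ((∑ u ∈ S, (eo G (S.filter (fun v => G.Adj u v)) : ℤ))) := by
      rw [hF]
      rw [Finset.sum_sub_distrib, Finset.sum_add_distrib, ← Finset.mul_sum, ← Finset.mul_sum,
        ← Finset.mul_sum]
    rw [e1]
    have e2 : ((∑ u ∈ S, eo G (S.filter (fun v => ¬ G.Adj u v)) : ℕ) : ℤ) +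
        2 * ((∑ p ∈ S, (ro G S p) ^ 2 : ℕ) : ℤ) =
        (S.card : ℤ) * (eo G S : ℤ) + ((∑ u ∈ S, eo G (S.filter (fun v => G.Adj u v)) : ℕ) : ℤ) := by
      exact_mod_cast congrArg (Nat.cast : ℕ → ℤ) hKA
    push_cast at e2 ⊢
    linarith
  -- Cauchy-Schwarz
  have hE : (eo G S : ℤ) = ∑ p ∈ S, (ro G S p : ℤ) := by
    have h' : eo G S = ∑ p ∈ S, ro G S p := rfl
    rw [h', Nat.cast_sum]
  have hCS : (eo G S : ℤ) ^ 2 ≤ (S.card : ℤ) * ∑ p ∈ S, (ro G S p : ℤ) ^ 2 := by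
    rw [hE]
    exact_mod_cast sq_sum_le_card_mul_sum_sq (s := S) (f := fun p => (ro G S p : ℤ))
  -- combine
  refine ⟨hcol u₀ hu₀, ?_⟩
  have hper : 6 * (mo G S (hcol u₀ hu₀) : ℤ) ≤ F u₀ := by
    have := hcolbd u₀ hu₀
    rw [hF]
    push_cast
    push_cast at this
    linarith
  have hs1 : (1 : ℤ) ≤ (S.card : ℤ) := by exact_mod_cast hne.card_pos
  have hQ0 : (0 : ℤ) ≤ ∑ p ∈ S, (ro G S p : ℤ) ^ 2 :=
    Finset.sum_nonneg fun p _ => sq_nonneg _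
  have step1 : (S.card : ℤ) * (6 * (mo G S (hcol u₀ hu₀) : ℤ)) ≤
      6 * (S.card : ℤ) * (eo G S : ℤ) - 8 * ∑ p ∈ S, (ro G S p : ℤ) ^ 2 := by
    have : (S.card : ℤ) * (6 * (mo G S (hcol u₀ hu₀) : ℤ)) ≤ (S.card : ℤ) * F u₀ := by
      apply mul_le_mul_of_nonneg_left hper (by linarith)
    rw [← hsum]
    calc (S.card : ℤ) * (6 * (mo G S (hcol u₀ hu₀) : ℤ)) ≤ (S.card : ℤ) * F u₀ := this
    _ ≤ ∑ u ∈ S, F u := by rw [← nsmul_eq_mul]; exact havg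
  -- multiply step1 by S.card and use CS
  nlinarith [step1, hCS, hs1, hQ0, mul_le_mul_of_nonneg_left step1 (le_trans zero_le_one hs1)]

lemma mo_insert {P : Finset V} {a : V} (ha : a ∉ P) (h : V → Fin 4) :
    mo G (insert a P) h =
      mo G P h + (ew G a a * (if h a = h a then 1 else 0) +
        (∑ q ∈ P, ew G a q * (if h a = h q then 1 else 0) +
         ∑ p ∈ P, ew G p a * (if h p = h a then 1 else 0))) := by
  unfold mo
  rw [Finset.sum_insert ha]
  have inner : ∀ p, ∑ q ∈ insert a P, ew G p q * (if h p = h q then 1 else 0)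
      = ew G p a * (if h p = h a then 1 else 0)
        + ∑ q ∈ P, ew G p q * (if h p = h q then 1 else 0) :=
    fun p => Finset.sum_insert ha
  simp_rw [inner, Finset.sum_add_distrib]
  ring

lemma mo_insert' {P : Finset V} {a : V} (ha : a ∉ P) (h : V → Fin 4) :
    mo G (insert a P) h =
      mo G P h + 2 * ∑ q ∈ P, ew G a q * (if h q = h a then 1 else 0) := by
  rw [mo_insert ha h, ew_self]
  have e1 : ∑ p ∈ P, ew G p a * (if h p = h a then 1 else 0)
      = ∑ q ∈ P, ew G a q * (if h q = h a then 1 else 0) := by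
    refine Finset.sum_congr rfl fun p _ => ?_
    rw [ew_symm]
  have e2 : ∑ q ∈ P, ew G a q * (if h a = h q then 1 else 0)
      = ∑ q ∈ P, ew G a q * (if h q = h a then 1 else 0) := by
    refine Finset.sum_congr rfl fun q _ => ?_
    congr 1
    simp [eq_comm]
  rw [e1, e2]
  ring

lemma eo_insert {P : Finset V} {a : V} (ha : a ∉ P) :
    eo G (insert a P) = eo G P + 2 * ro G P a := by
  unfold eo
  rw [Finset.sum_insert ha]
  have inner : ∀ p, ∑ q ∈ insert a P, ew G p q = ew G p a + ∑ q ∈ P, ew G p q :=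
    fun p => Finset.sum_insert ha
  simp_rw [inner, Finset.sum_add_distrib]
  rw [ew_self]
  have e1 : ∑ p ∈ P, ew G p a = ro G P a := by
    unfold ro
    refine Finset.sum_congr rfl fun p _ => ?_
    rw [ew_symm]
  have e2 : ∑ q ∈ P, ew G a q = ro G P a := rfl
  rw [e1, e2]
  ring

/-- **T-extension**: greedily extend a coloring of S to S ∪ U. -/
lemma Text (S : Finset V) (h₀ : V → Fin 4) (U : Finset V) :
    ∃ h : V → Fin 4, (∀ v ∈ S, h v = h₀ v) ∧
      4 * mo G (S ∪ U) h + eo G S ≤ 4 * mo G S h₀ + eo G (S ∪ U) := by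
  classical
  induction U using Finset.induction_on with
  | empty => exact ⟨h₀, fun v _ => rfl, by rw [Finset.union_empty]⟩
  | @insert a U ha IH =>
    obtain ⟨h', hagree, hbd⟩ := IH
    rw [Finset.union_insert]
    by_cases haP : a ∈ S ∪ U
    · rw [Finset.insert_eq_self.mpr haP]
      exact ⟨h', hagree, hbd⟩
    · set P := S ∪ U with hP
      set k : Fin 4 → ℕ := fun c => ∑ q ∈ P, ew G a q * (if h' q = c then 1 else 0) with hk
      have hktot : ∑ c ∈ (Finset.univ : Finset (Fin 4)), k c = ro G P a := by
        rw [hk]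
        rw [Finset.sum_comm]
        refine Finset.sum_congr rfl fun q _ => ?_
        rw [← Finset.mul_sum]
        have : ∑ c ∈ (Finset.univ : Finset (Fin 4)), (if h' q = c then 1 else 0) = 1 := by
          rw [Finset.sum_ite_eq (Finset.univ : Finset (Fin 4)) (h' q) (fun _ => 1)]
          simp
        rw [this, mul_one]
      obtain ⟨c₀, _, hcmin⟩ := (Finset.univ : Finset (Fin 4)).exists_min_image k ⟨0, Finset.mem_univ 0⟩
      have hc4 : 4 * k c₀ ≤ ro G P a := by
        have : (Finset.univ : Finset (Fin 4)).card • k c₀ ≤ ∑ c ∈ Finset.univ, k c :=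
          Finset.card_nsmul_le_sum _ _ _ (fun x hx => hcmin x hx)
        rw [hktot] at this
        simpa using this
      set h : V → Fin 4 := Function.update h' a c₀ with hh
      have hhP : ∀ v ∈ P, h v = h' v := by
        intro v hv
        rw [hh, Function.update_apply]
        have : v ≠ a := fun hva => haP (hva ▸ hv)
        simp [this]
      have hhS : ∀ v ∈ S, h v = h₀ v := by
        intro v hv
        rw [hhP v (Finset.mem_union_left _ hv)]
        exact hagree v hv
      refine ⟨h, hhS, ?_⟩
      have hmoP : mo G P h = mo G P h' := mo_congr hhP
      have hmoI : mo G (insert a P) h = mo G P h + 2 * k c₀ := by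
        rw [mo_insert' haP h]
        congr 1
        congr 1
        rw [hk]
        refine Finset.sum_congr rfl fun q hq => ?_
        rw [hhP q hq]
        have : h a = c₀ := by rw [hh]; simp
        rw [this]
      have heoI : eo G (insert a P) = eo G P + 2 * ro G P a := eo_insert haP
      rw [hmoI, heoI, hmoP]
      omega

/-- pointwise Fin 4 pairing count -/
lemma fin4_pairing : ∀ a b : Fin 4,
    ((if ((a = 0 ∨ a = 1) ↔ (b = 0 ∨ b = 1)) then 1 else 0) +
     (if ((a = 0 ∨ a = 2) ↔ (b = 0 ∨ b = 2)) then 1 else 0) +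
     (if ((a = 0 ∨ a = 3) ↔ (b = 0 ∨ b = 3)) then 1 else 0) : ℕ)
    = 2 * (if a = b then 1 else 0) + 1 := by decide

lemma sum2_add {α : Type*} (S : Finset α) (f g : α → α → ℕ) :
    ∑ p ∈ S, ∑ q ∈ S, (f p q + g p q)
    = (∑ p ∈ S, ∑ q ∈ S, f p q) + ∑ p ∈ S, ∑ q ∈ S, g p q := by
  simp [Finset.sum_add_distrib]

/-- ordered same-side count for a bipartition given by a predicate -/
def bado (π : V → Prop) [DecidablePred π] : ℕ :=
  ∑ p ∈ Finset.univ, ∑ q ∈ Finset.univ, ew G p q * (if (π p ↔ π q) then 1 else 0)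

lemma pairing (h : V → Fin 4) :
    ∃ π : V → Prop, ∃ _ : DecidablePred π,
      3 * bado (G := G) π ≤ 2 * mo G Finset.univ h + eo G Finset.univ := by
  have main : ∀ p q : V,
      ew G p q * (if ((h p = 0 ∨ h p = 1) ↔ (h q = 0 ∨ h q = 1)) then 1 else 0) +
      (ew G p q * (if ((h p = 0 ∨ h p = 2) ↔ (h q = 0 ∨ h q = 2)) then 1 else 0) +
       ew G p q * (if ((h p = 0 ∨ h p = 3) ↔ (h q = 0 ∨ h q = 3)) then 1 else 0))
      = 2 * (ew G p q * (if h p = h q then 1 else 0)) + ew G p q := by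
    intro p q
    have hfp := fin4_pairing (h p) (h q)
    have e1 : ew G p q *
        ((if ((h p = 0 ∨ h p = 1) ↔ (h q = 0 ∨ h q = 1)) then 1 else 0) +
         ((if ((h p = 0 ∨ h p = 2) ↔ (h q = 0 ∨ h q = 2)) then 1 else 0) +
          (if ((h p = 0 ∨ h p = 3) ↔ (h q = 0 ∨ h q = 3)) then 1 else 0)))
        = ew G p q * (2 * (if h p = h q then 1 else 0) + 1) := by
      congr 1
      omega
    calc ew G p q * (if ((h p = 0 ∨ h p = 1) ↔ (h q = 0 ∨ h q = 1)) then 1 else 0) +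
        (ew G p q * (if ((h p = 0 ∨ h p = 2) ↔ (h q = 0 ∨ h q = 2)) then 1 else 0) +
         ew G p q * (if ((h p = 0 ∨ h p = 3) ↔ (h q = 0 ∨ h q = 3)) then 1 else 0))
        = ew G p q *
          ((if ((h p = 0 ∨ h p = 1) ↔ (h q = 0 ∨ h q = 1)) then 1 else 0) +
           ((if ((h p = 0 ∨ h p = 2) ↔ (h q = 0 ∨ h q = 2)) then 1 else 0) +
            (if ((h p = 0 ∨ h p = 3) ↔ (h q = 0 ∨ h q = 3)) then 1 else 0))) := by ring
    _ = ew G p q * (2 * (if h p = h q then 1 else 0) + 1) := e1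
    _ = 2 * (ew G p q * (if h p = h q then 1 else 0)) + ew G p q := by ring
  have htot : bado (G := G) (fun v => h v = 0 ∨ h v = 1) + (bado (G := G) (fun v => h v = 0 ∨ h v = 2) +
      bado (G := G) (fun v => h v = 0 ∨ h v = 3))
      = 2 * mo G Finset.univ h + eo G Finset.univ := by
    unfold bado
    rw [← sum2_add (Finset.univ : Finset V)
        (fun p q => ew G p q * (if ((h p = 0 ∨ h p = 2) ↔ (h q = 0 ∨ h q = 2)) then 1 else 0))
        (fun p q => ew G p q * (if ((h p = 0 ∨ h p = 3) ↔ (h q = 0 ∨ h q = 3)) then 1 else 0))]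
    rw [← sum2_add (Finset.univ : Finset V)
        (fun p q => ew G p q * (if ((h p = 0 ∨ h p = 1) ↔ (h q = 0 ∨ h q = 1)) then 1 else 0))
        (fun p q => ew G p q * (if ((h p = 0 ∨ h p = 2) ↔ (h q = 0 ∨ h q = 2)) then 1 else 0) +
          ew G p q * (if ((h p = 0 ∨ h p = 3) ↔ (h q = 0 ∨ h q = 3)) then 1 else 0))]
    have hR : 2 * mo G Finset.univ h + eo G Finset.univ
        = ∑ p ∈ Finset.univ, ∑ q ∈ Finset.univ,
            (2 * (ew G p q * (if h p = h q then 1 else 0)) + ew G p q) := by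
      rw [sum2_add (Finset.univ : Finset V)
          (fun p q => 2 * (ew G p q * (if h p = h q then 1 else 0)))
          (fun p q => ew G p q)]
      unfold mo eo
      rw [Finset.mul_sum]
      congr 1
      refine Finset.sum_congr rfl fun p _ => ?_
      rw [Finset.mul_sum]
    rw [hR]
    exact Finset.sum_congr rfl fun p _ => Finset.sum_congr rfl fun q _ => main p q
  by_contra hcon
  push_neg at hcon
  have h1 := hcon (fun v => h v = 0 ∨ h v = 1) inferInstance
  have h2 := hcon (fun v => h v = 0 ∨ h v = 2) inferInstance
  have h3 := hcon (fun v => h v = 0 ∨ h v = 3) inferInstance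
  omega

lemma eo_univ_le (S : Finset V) :
    eo G Finset.univ ≤ eo G S + 2 * ((Finset.univ \ S).card * (Fintype.card V - 1)) := by
  have hdisj : Disjoint S (Finset.univ \ S) := Finset.disjoint_sdiff
  have hunion : S ∪ (Finset.univ \ S) = Finset.univ :=
    Finset.union_sdiff_of_subset (Finset.subset_univ S)
  have hsplit := eo_union (G := G) hdisj
  rw [hunion] at hsplit
  set T := Finset.univ \ S with hT
  have hcr : cr G S T = cr G T S := cr_symm _ _
  have hrow : eo G T + cr G T S = ∑ q ∈ T, ro G Finset.univ q := by
    rw [eo_add_cr]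
    refine Finset.sum_congr rfl fun q _ => ?_
    rw [← hunion, ro_union hdisj]
    exact Nat.add_comm _ _
  have hbound : ∑ q ∈ T, ro G Finset.univ q ≤ T.card * (Fintype.card V - 1) := by
    calc ∑ q ∈ T, ro G Finset.univ q ≤ ∑ _q ∈ T, (Fintype.card V - 1) :=
          Finset.sum_le_sum fun q _ => ro_univ_le q
    _ = T.card * (Fintype.card V - 1) := by rw [Finset.sum_const, smul_eq_mul]
  have h1 : eo G T ≤ eo G T + cr G T S := Nat.le_add_right _ _
  omega

/-- construction of the deletion set from a bipartition predicate -/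
lemma Dmain (π : V → Prop) [DecidablePred π] :
    ∃ D : Finset (Sym2 V), (D : Set (Sym2 V)) ⊆ G.edgeSet ∧
      (G.deleteEdges (D : Set (Sym2 V))).Colorable 2 ∧ 2 * D.card = bado (G := G) π := by
  classical
  have hsym : Std.Symm (fun a b : V => (π a ↔ π b)) := ⟨fun a b h => h.symm⟩
  set D : Finset (Sym2 V) := G.edgeFinset.filter (fun ed => ed ∈ Sym2.fromRel hsym) with hD
  have hDmem : ∀ e, e ∈ D ↔ e ∈ G.edgeFinset ∧ e ∈ Sym2.fromRel hsym := by
    intro e; rw [hD, Finset.mem_filter]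
  refine ⟨D, ?_, ?_, ?_⟩
  · intro e he
    rw [Finset.mem_coe, hDmem] at he
    exact SimpleGraph.mem_edgeFinset.1 he.1
  · refine ⟨SimpleGraph.Coloring.mk (fun v => if π v then (0 : Fin 2) else 1) ?_⟩
    intro a b hab
    rw [SimpleGraph.deleteEdges_adj] at hab
    obtain ⟨hadj, hnd⟩ := hab
    intro hcol
    apply hnd
    have hiff : π a ↔ π b := by
      by_cases ha : π a <;> by_cases hb : π b <;> simp [ha, hb] at hcol ⊢ <;> tauto
    rw [Finset.mem_coe, hDmem]
    exact ⟨SimpleGraph.mem_edgeFinset.2 ((SimpleGraph.mem_edgeSet G).2 hadj),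
      Sym2.fromRel_prop.2 hiff⟩
  · -- counting : 2 * D.card = bado π
    have hpairs : bado (G := G) π = ((Finset.univ ×ˢ Finset.univ).filter
        (fun z : V × V => G.Adj z.1 z.2 ∧ (π z.1 ↔ π z.2))).card := by
      rw [Finset.card_filter, Finset.sum_product]
      refine Finset.sum_congr rfl fun p _ => Finset.sum_congr rfl fun q _ => ?_
      by_cases h1 : G.Adj p q <;> by_cases h2 : (π p ↔ π q) <;> simp [ew, h1, h2]
    set dbl : Sym2 V → Finset (V × V) :=
      Sym2.lift ⟨fun a b => ({(a, b), (b, a)} : Finset (V × V)), by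
        intro a b
        exact Finset.pair_comm _ _⟩ with hdbl
    have hdbl_mk : ∀ a b : V, dbl s(a, b) = ({(a, b), (b, a)} : Finset (V × V)) := by
      intro a b; rw [hdbl]; simp
    have hmem_dbl : ∀ (z : V × V) (ed : Sym2 V), z ∈ dbl ed → s(z.1, z.2) = ed := by
      intro z ed
      induction ed using Sym2.inductionOn with
      | hf a b =>
        intro hz
        rw [hdbl_mk] at hz
        rcases Finset.mem_insert.1 hz with h | h
        · rw [h]
        · rw [Finset.mem_singleton] at h
          rw [h]
          exact Sym2.eq_swap
    have hcover : ((Finset.univ ×ˢ Finset.univ).filter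
        (fun z : V × V => G.Adj z.1 z.2 ∧ (π z.1 ↔ π z.2))) = D.biUnion dbl := by
      ext z
      rw [Finset.mem_filter, Finset.mem_biUnion]
      constructor
      · rintro ⟨-, hadj, hiff⟩
        refine ⟨s(z.1, z.2), ?_, ?_⟩
        · rw [hDmem]
          exact ⟨SimpleGraph.mem_edgeFinset.2 ((SimpleGraph.mem_edgeSet G).2 hadj),
            Sym2.fromRel_prop.2 hiff⟩
        · rw [hdbl_mk]
          exact Finset.mem_insert_self _ _
      · rintro ⟨ed, hed, hz⟩
        rw [hDmem] at hed
        obtain ⟨hedge, hrel⟩ := hed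
        have := hmem_dbl z ed hz
        subst this
        have hadj : G.Adj z.1 z.2 := (SimpleGraph.mem_edgeSet G).1
          (SimpleGraph.mem_edgeFinset.1 hedge)
        have hiff : π z.1 ↔ π z.2 :=
          (Sym2.fromRel_prop (sym := hsym) (a := z.1) (b := z.2)).1 hrel
        exact ⟨Finset.mem_product.2 ⟨Finset.mem_univ _, Finset.mem_univ _⟩, hadj, hiff⟩
    have hdisjb : ∀ e1 ∈ D, ∀ e2 ∈ D, e1 ≠ e2 → Disjoint (dbl e1) (dbl e2) := by
      intro e1 _ e2 _ hne
      rw [Finset.disjoint_left]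
      intro z hz1 hz2
      exact hne ((hmem_dbl z e1 hz1).symm.trans (hmem_dbl z e2 hz2))
    have hcard2 : ∀ ed ∈ D, (dbl ed).card = 2 := by
      intro ed hed
      rw [hDmem] at hed
      have hnd : ¬ ed.IsDiag := SimpleGraph.not_isDiag_of_mem_edgeFinset hed.1
      revert hnd
      induction ed using Sym2.inductionOn with
      | hf a b =>
        intro hnd
        have hab : a ≠ b := fun h => hnd (Sym2.mk_isDiag_iff.2 h)
        rw [hdbl_mk]
        have hne : ((a, b) : V × V) ∉ ({(b, a)} : Finset (V × V)) := by
          rw [Finset.mem_singleton]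
          intro h
          exact hab (congrArg Prod.fst h)
        rw [Finset.card_insert_of_notMem hne, Finset.card_singleton]
    rw [hpairs, hcover, Finset.card_biUnion hdisjb]
    rw [Finset.sum_congr rfl hcard2, Finset.sum_const, smul_eq_mul]
    ring

end TBaux



theorem tauB_le_of_cliqueFree_six_big_K5free_set (G : SimpleGraph V) (h6 : G.CliqueFree 6)
    (S : Finset V) (hS : (G.induce (S : Set V)).CliqueFree 5)
    (hcard : 49 * (Fintype.card V : ℝ) / 50 ≤ (S.card : ℝ)) :
    (tauB G : ℝ) ≤ 3 * (Fintype.card V : ℝ) ^ 2 / 20 := by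
  classical
  letI : DecidableRel G.Adj := Classical.decRel _
  by_cases hne : S.Nonempty
  case neg =>
    rw [Finset.not_nonempty_iff_eq_empty] at hne
    have hn0 : Fintype.card V = 0 := by
      rw [hne] at hcard
      simp only [Finset.card_empty, Nat.cast_zero] at hcard
      have h0 : (Fintype.card V : ℝ) ≤ 0 := by linarith
      exact_mod_cast le_antisymm (by exact_mod_cast h0) (by positivity)
    haveI : IsEmpty V := Fintype.card_eq_zero_iff.mp hn0
    have htau0 : tauB G ≤ 0 := by
      apply Nat.sInf_le
      refine ⟨∅, by simp, ?_, by simp⟩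
      exact ⟨SimpleGraph.Coloring.mk (fun v => isEmptyElim v) (fun {a b} h => isEmptyElim a)⟩
    have h0' : tauB G = 0 := Nat.le_zero.1 htau0
    rw [h0']
    push_cast
    positivity
  case pos =>
    -- Main case
    obtain ⟨h₀, hkey⟩ := TBaux.KEY_S (G := G) hne (TBaux.no5 hS)
    obtain ⟨h, hagree, hext⟩ := TBaux.Text (G := G) S h₀ Finset.univ
    rw [Finset.union_eq_right.mpr (Finset.subset_univ S)] at hext
    obtain ⟨π, hdec, hpair⟩ := TBaux.pairing (G := G) h
    obtain ⟨D, hsub, hcol, hcount⟩ := @TBaux.Dmain V _ _ G _ π hdec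
    have htau : tauB G ≤ D.card := Nat.sInf_le ⟨D, hsub, hcol, rfl⟩
    have hTbd := TBaux.eo_univ_le (G := G) S
    have hsle : S.card ≤ Fintype.card V := Finset.card_le_card (Finset.subset_univ S) |>.trans
      (le_of_eq (Finset.card_univ))
    have hsdcard : (Finset.univ \ S).card = Fintype.card V - S.card := by
      rw [Finset.card_sdiff_of_subset (Finset.subset_univ S), Finset.card_univ]
    have hs1 : 1 ≤ S.card := hne.card_pos
    have hn1 : 1 ≤ Fintype.card V := le_trans hs1 hsle
    -- Real variables
    set nR : ℝ := (Fintype.card V : ℝ) with hnR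
    set sR : ℝ := (S.card : ℝ) with hsR
    set ER : ℝ := (TBaux.eo G S : ℝ) with hER
    set MR : ℝ := (TBaux.eo G Finset.univ : ℝ) with hMR
    set bR : ℝ := (D.card : ℝ) with hbR
    set muR : ℝ := (TBaux.mo G Finset.univ h : ℝ) with hmuR
    set msR : ℝ := (TBaux.mo G S h₀ : ℝ) with hmsR
    have c1 : 2 * bR = (TBaux.bado (G := G) π : ℝ) := by
      rw [hbR]; exact_mod_cast congrArg (Nat.cast : ℕ → ℝ) hcount
    have c2 : 3 * (TBaux.bado (G := G) π : ℝ) ≤ 2 * muR + MR := by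
      rw [hmuR, hMR]; exact_mod_cast hpair
    have c3 : 4 * muR + ER ≤ 4 * msR + MR := by
      rw [hmuR, hER, hmsR, hMR]; exact_mod_cast hext
    have c4 : 6 * sR ^ 2 * msR ≤ 6 * ER * sR ^ 2 - 8 * ER ^ 2 := by
      rw [hsR, hER, hmsR]
      exact_mod_cast hkey
    have c5 : MR ≤ ER + 2 * ((nR - sR) * (nR - 1)) := by
      have hcast1 : ((Finset.univ \ S).card : ℝ) = nR - sR := by
        rw [hsdcard, hnR, hsR]
        push_cast [Nat.cast_sub hsle]
        ring
      have hcast2 : ((Fintype.card V - 1 : ℕ) : ℝ) = nR - 1 := by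
        rw [hnR]
        push_cast [Nat.cast_sub hn1]
        ring
      have := hTbd
      rw [hMR, hER]
      calc MR ≤ (TBaux.eo G S : ℝ) + 2 * (((Finset.univ \ S).card : ℝ) *
            ((Fintype.card V - 1 : ℕ) : ℝ)) := by
            rw [hMR]; exact_mod_cast hTbd
      _ = (TBaux.eo G S : ℝ) + 2 * ((nR - sR) * (nR - 1)) := by rw [hcast1, hcast2]
    have c6 : 49 * nR ≤ 50 * sR := by rw [hnR, hsR]; linarith
    have c7 : sR ≤ nR := by rw [hnR, hsR]; exact_mod_cast hsle
    have c8 : 1 ≤ sR := by rw [hsR]; exact_mod_cast hs1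
    have hs2pos : (0 : ℝ) < sR ^ 2 := by positivity
    have hn0R : (0 : ℝ) ≤ nR := by linarith
    -- chain
    have h1 : 6 * bR ≤ 2 * muR + MR := by linarith
    have h2 : 12 * bR ≤ 4 * msR + 3 * MR - ER := by linarith
    have h3 : 72 * sR ^ 2 * bR ≤ 24 * sR ^ 2 * msR + 18 * sR ^ 2 * MR - 6 * sR ^ 2 * ER := by
      nlinarith [mul_le_mul_of_nonneg_left h2 (le_of_lt hs2pos)]
    have h4 : 24 * sR ^ 2 * msR ≤ 24 * ER * sR ^ 2 - 32 * ER ^ 2 := by linarith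
    have h6 : sR ^ 2 * MR ≤ sR ^ 2 * (ER + 2 * ((nR - sR) * (nR - 1))) :=
      mul_le_mul_of_nonneg_left c5 (le_of_lt hs2pos)
    have h7 : 72 * sR ^ 2 * bR ≤ 36 * ER * sR ^ 2 - 32 * ER ^ 2
        + 36 * (sR ^ 2 * ((nR - sR) * (nR - 1))) := by nlinarith [h3, h4, h6]
    have h8 : 36 * ER * sR ^ 2 - 32 * ER ^ 2 ≤ (81 / 8) * sR ^ 4 := by
      nlinarith [sq_nonneg (16 * ER - 9 * sR ^ 2)]
    have h10 : (nR - sR) * (nR - 1) ≤ (nR - sR) * nR := by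
      apply mul_le_mul_of_nonneg_left (by linarith) (by linarith)
    have h10' : sR ^ 2 * ((nR - sR) * (nR - 1)) ≤ sR ^ 2 * ((nR - sR) * nR) :=
      mul_le_mul_of_nonneg_left h10 (le_of_lt hs2pos)
    have h11 : 72 * sR ^ 2 * bR ≤ (81 / 8) * sR ^ 4 + 36 * (sR ^ 2 * ((nR - sR) * nR)) := by
      nlinarith [h7, h8, h10']
    have h12 : 72 * bR ≤ (81 / 8) * sR ^ 2 + 36 * ((nR - sR) * nR) := by
      nlinarith [h11, hs2pos, sq_nonneg sR]
    -- final quadratic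
    have hgoal : bR ≤ 3 * nR ^ 2 / 20 := by
      nlinarith [h12, mul_nonneg (by linarith : (0:ℝ) ≤ 50 * sR - 49 * nR)
        (by linarith : (0:ℝ) ≤ nR - sR),
        mul_nonneg hn0R (by linarith : (0:ℝ) ≤ 50 * sR - 49 * nR), sq_nonneg nR]
    calc (tauB G : ℝ) ≤ bR := by rw [hbR]; exact_mod_cast htau
    _ ≤ 3 * nR ^ 2 / 20 := hgoal
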